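/- arXiv:math/9204219 — 5 statements merged into one kernel-verified Lean document; each statement's English description precedes it below -/
import Mathlib

section
/- There exists a bijection θ : ℕ × (finite sequences of countable ordinals) → ω₁ such that (i) for every limit ordinal δ < ω₁, θ maps ℕ × (finite sequences of ordinals below δ) onto δ, and (ii) for all k ∈ ℕ and finite sequences s, t of countable ordinals, if t properly extends s then θ(k, s) < θ(k, t). -/
open Ordinal Set

noncomputable def omega1 : Ordinal := (Cardinal.aleph 1).ord

/-- The type of countable ordinals. -/
abbrev O1 : Type _ := ↥(Set.Iio omega1)

namespace Stmt1Aux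

attribute [local instance] Classical.propDecidable

/-- maximum of the entries of a list (0 for the empty list) -/
noncomputable def maxs : List O1 → Ordinal := fun l => l.foldr (fun a m => max a.1 m) 0

@[simp] lemma maxs_nil : maxs [] = 0 := rfl
@[simp] lemma maxs_cons (a : O1) (s : List O1) : maxs (a :: s) = max a.1 (maxs s) := rfl

lemma maxs_lt {δ : Ordinal} (hδ : 0 < δ) (s : List O1) :
    maxs s < δ ↔ ∀ x ∈ s, (x : O1).1 < δ := by
  induction s with
  | nil => simpa
  | cons a s ih => simp [ih]

lemma omega1_pos : 0 < omega1 := by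
  rw [omega1, Cardinal.lt_ord]
  simpa using Cardinal.aleph0_pos.trans Cardinal.aleph0_lt_aleph_one

lemma maxs_lt_omega1 (s : List O1) : maxs s < omega1 :=
  (maxs_lt omega1_pos s).2 fun x _ => x.2

lemma le_maxs_of_mem {a : O1} {s : List O1} (h : a ∈ s) : a.1 ≤ maxs s := by
  induction s with
  | nil => simp at h
  | cons b s ih =>
    rcases List.mem_cons.1 h with rfl | h
    · simp
    · simpa using Or.inr (ih h)

lemma maxs_prefix_le {s t : List O1} (h : s <+: t) : maxs s ≤ maxs t := by
  obtain ⟨r, rfl⟩ := h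
  induction s with
  | nil => exact zero_le
  | cons a s ih => simpa using max_le_max le_rfl ih

/-- the "block index" of a list -/
noncomputable def qOf (s : List O1) : Ordinal := maxs s / omega0

lemma qOf_le_maxs (s : List O1) : qOf s ≤ maxs s :=
  calc qOf s = 1 * qOf s := (one_mul _).symm
    _ ≤ omega0 * qOf s := mul_le_mul_left Ordinal.one_lt_omega0.le _
    _ ≤ maxs s := Ordinal.mul_div_le _ _

lemma qOf_lt_omega1 (s : List O1) : qOf s < omega1 :=
  (qOf_le_maxs s).trans_lt (maxs_lt_omega1 s)

lemma card_le_of_lt_omega1 {o : Ordinal} (h : o < omega1) : o.card ≤ Cardinal.aleph0 := by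
  rw [omega1, Cardinal.lt_ord] at h
  have h1 : Cardinal.aleph 1 = Order.succ Cardinal.aleph0 := by
    rw [show (1 : Ordinal) = Order.succ 0 by simp, Cardinal.aleph_succ, Cardinal.aleph_zero]
  rw [h1, Order.lt_succ_iff] at h
  exact h

lemma block_lt_omega1 {q : Ordinal} (hq : q < omega1) (n : ℕ) :
    omega0 * q + n < omega1 := by
  rw [omega1, Cardinal.lt_ord, Ordinal.card_add, Ordinal.card_mul, Ordinal.card_omega0,
    Ordinal.card_nat]
  apply Cardinal.add_lt_of_lt Cardinal.aleph0_lt_aleph_one.le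
  · exact Cardinal.mul_lt_of_lt Cardinal.aleph0_lt_aleph_one.le Cardinal.aleph0_lt_aleph_one
      ((card_le_of_lt_omega1 hq).trans_lt Cardinal.aleph0_lt_aleph_one)
  · exact (Cardinal.nat_lt_aleph0 n).trans Cardinal.aleph0_lt_aleph_one

lemma succ_lt_omega1 {q : Ordinal} (hq : q < omega1) : Order.succ q < omega1 := by
  rw [omega1, Cardinal.lt_ord] at hq ⊢
  rw [Ordinal.card_succ]
  exact Cardinal.add_lt_of_lt Cardinal.aleph0_lt_aleph_one.le hq
    (Cardinal.one_lt_aleph0.trans Cardinal.aleph0_lt_aleph_one)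

lemma blockend_lt_omega1 {q : Ordinal} (hq : q < omega1) :
    omega0 * Order.succ q < omega1 := by
  rw [omega1, Cardinal.lt_ord, Ordinal.card_mul, Ordinal.card_omega0]
  exact Cardinal.mul_lt_of_lt Cardinal.aleph0_lt_aleph_one.le Cardinal.aleph0_lt_aleph_one
    ((card_le_of_lt_omega1 (succ_lt_omega1 hq)).trans_lt Cardinal.aleph0_lt_aleph_one)

/-- The set of pairs whose list lies in block `q`. -/
def S (q : Ordinal) : Set (ℕ × List O1) := {x | qOf x.2 = q}

lemma countable_Iio {o : Ordinal} (h : o < omega1) : (Set.Iio o).Countable := by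
  rw [Cardinal.countable_iff_lt_aleph_one, Ordinal.mk_Iio_ordinal]
  calc Cardinal.lift o.card ≤ Cardinal.lift Cardinal.aleph0 :=
        Cardinal.lift_le.2 (card_le_of_lt_omega1 h)
    _ = Cardinal.aleph0 := Cardinal.lift_aleph0
    _ < Cardinal.aleph 1 := Cardinal.aleph0_lt_aleph_one

lemma countable_S (q : Ordinal) : (S q).Countable := by
  by_cases hq : q < omega1
  · set B : Set O1 := {a | a.1 < omega0 * Order.succ q} with hB
    have hBc : B.Countable :=
      (countable_Iio (blockend_lt_omega1 hq)).preimage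
        (f := fun a : O1 => a.1) Subtype.val_injective
    have : Countable B := hBc.to_subtype
    rw [← Set.countable_coe_iff]
    have hmem : ∀ x : S q, ∀ a ∈ x.1.2, a ∈ B := by
      rintro ⟨⟨k, s⟩, hx⟩ a ha
      have h1 : a.1 ≤ maxs s := le_maxs_of_mem ha
      have h2 : maxs s < omega0 * Order.succ (qOf s) :=
        Ordinal.lt_mul_succ_div _ Ordinal.omega0_ne_zero
      have hx' : qOf s = q := hx
      show a.1 < omega0 * Order.succ q
      rw [← hx']
      exact h1.trans_lt h2
    let g : S q → ℕ × List B := fun x =>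
      (x.1.1, x.1.2.attach.map (fun a => (⟨a.1, hmem x a.1 a.2⟩ : B)))
    have hg : Function.Injective g := by
      rintro x y hxy
      simp only [g, Prod.mk.injEq] at hxy
      obtain ⟨hk, hl⟩ := hxy
      have h3 : ∀ (z : ℕ × List O1) (hz : ∀ a ∈ z.2, a ∈ B),
          (z.2.attach.map fun a => (⟨a.1, hz a.1 a.2⟩ : B)).map Subtype.val = z.2 := by
        intro z hz
        simp [Function.comp_def, List.attach_map_subtype_val]
      have h2 := congrArg (fun l : List B => l.map (Subtype.val : B → O1)) hl
      rw [h3 x.1 (hmem x), h3 y.1 (hmem y)] at h2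
      exact Subtype.ext (Prod.ext hk h2)
    exact Function.Injective.countable hg
  · have : S q = ∅ := by
      ext x
      simp only [S, Set.mem_setOf_eq, Set.mem_empty_iff_false, iff_false]
      intro hx
      exact hq (hx ▸ qOf_lt_omega1 x.2)
    simp [this]

lemma maxs_single (a : O1) : maxs [a] = a.1 := by
  simp

lemma infinite_S {q : Ordinal} (hq : q < omega1) : (S q).Infinite := by
  have hlt : omega0 * q < omega1 := by simpa using block_lt_omega1 hq 0
  apply Set.infinite_of_injective_forall_mem
    (f := fun n : ℕ => ((n, [(⟨omega0 * q, hlt⟩ : O1)]) : ℕ × List O1))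
  · intro a b h
    exact (Prod.ext_iff.1 h).1
  · intro n
    show qOf _ = q
    rw [qOf, maxs_single]
    exact Ordinal.mul_div_cancel _ Ordinal.omega0_ne_zero

/-- an injective numbering of `S q` -/
noncomputable def eF (q : Ordinal) : S q → ℕ :=
  have : Countable (S q) := (countable_S q).to_subtype
  (Countable.exists_injective_nat _).choose

lemma eF_inj (q : Ordinal) : Function.Injective (eF q) := by
  have : Countable (S q) := (countable_S q).to_subtype
  exact (Countable.exists_injective_nat _).choose_spec

/-- the predecessors (weak prefixes with the same index) of an element of `S q` -/
def pre (q : Ordinal) (x : S q) : Set (S q) :=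
  {y | y.1.1 = x.1.1 ∧ y.1.2 <+: x.1.2}

lemma self_mem_pre (q : Ordinal) (x : S q) : x ∈ pre q x :=
  ⟨rfl, List.prefix_refl _⟩

lemma pre_finite (q : Ordinal) (x : S q) : (pre q x).Finite := by
  apply Set.Finite.of_finite_image (f := fun y : S q => y.1.2)
  · apply Set.Finite.subset (x.1.2.inits.finite_toSet)
    rintro l ⟨y, hy, rfl⟩
    exact List.mem_inits _ _ |>.2 hy.2
  · rintro y hy z hz h
    exact Subtype.ext (Prod.ext (hy.1.trans hz.1.symm) h)

/-- bound used in the coding -/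
noncomputable def A (q : Ordinal) (x : S q) : ℕ :=
  max x.1.2.length ((pre_finite q x).toFinset.sup (eF q))

lemma e_le_A (q : Ordinal) (x : S q) : eF q x ≤ A q x :=
  le_max_of_le_right (Finset.le_sup ((pre_finite q x).mem_toFinset.2 (self_mem_pre q x)))

lemma len_le_A (q : Ordinal) (x : S q) : x.1.2.length ≤ A q x := le_max_left _ _

lemma pre_mono {q : Ordinal} {x y : S q} (h : y ∈ pre q x) : pre q y ⊆ pre q x := by
  rintro z ⟨h1, h2⟩
  exact ⟨h1.trans h.1, h2.trans h.2⟩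

lemma A_mono {q : Ordinal} {x y : S q} (h : y ∈ pre q x) : A q y ≤ A q x := by
  apply max_le_max h.2.length_le
  apply Finset.sup_mono
  intro z hz
  exact (pre_finite q x).mem_toFinset.2 (pre_mono h ((pre_finite q y).mem_toFinset.1 hz))

/-- the coding function -/
noncomputable def cF (q : Ordinal) (x : S q) : ℕ :=
  (A q x) ^ 3 + x.1.2.length * (A q x + 1) + eF q x

lemma cF_lt_cube (q : Ordinal) (x : S q) : cF q x < (A q x + 1) ^ 3 := by
  have h1 := e_le_A q x
  have h2 := len_le_A q x
  unfold cF
  nlinarith [sq_nonneg (A q x)]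

lemma cube_le_cF (q : Ordinal) (x : S q) : (A q x) ^ 3 ≤ cF q x := by
  unfold cF; omega

lemma cF_lt {q : Ordinal} {x y : S q} (h : y ∈ pre q x) (hne : y.1.2 ≠ x.1.2) :
    cF q y < cF q x := by
  have hA : A q y ≤ A q x := A_mono h
  have hL : y.1.2.length < x.1.2.length :=
    lt_of_le_of_ne h.2.length_le (fun hl => hne (h.2.eq_of_length hl))
  have h1 := e_le_A q y
  have h2 := len_le_A q x
  have h3 : (A q y) ^ 3 ≤ (A q x) ^ 3 := Nat.pow_le_pow_left hA 3
  unfold cF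
  nlinarith [Nat.mul_le_mul (le_refl (y.1.2.length)) (Nat.add_le_add_right hA 1),
    Nat.mul_le_mul (Nat.succ_le_of_lt hL) (le_refl (A q x + 1))]

lemma cF_inj (q : Ordinal) : Function.Injective (cF q) := by
  intro x y h
  have hA : A q x = A q y := by
    rcases Nat.lt_trichotomy (A q x) (A q y) with hlt | heq | hlt
    · exfalso
      have := (cF_lt_cube q x).trans_le
        ((Nat.pow_le_pow_left (Nat.succ_le_of_lt hlt) 3).trans (cube_le_cF q y))
      omega
    · exact heq
    · exfalso
      have := (cF_lt_cube q y).trans_le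
        ((Nat.pow_le_pow_left (Nat.succ_le_of_lt hlt) 3).trans (cube_le_cF q x))
      omega
  have he : eF q x = eF q y := by
    have h1 := e_le_A q x
    have h2 := e_le_A q y
    rw [hA] at h1
    have h' := h
    unfold cF at h'
    rw [hA] at h'
    have hsum : x.1.2.length * (A q y + 1) + eF q x
        = y.1.2.length * (A q y + 1) + eF q y := by omega
    have hx : eF q x = (x.1.2.length * (A q y + 1) + eF q x) % (A q y + 1) := by
      rw [mul_comm, Nat.mul_add_mod, Nat.mod_eq_of_lt (by omega)]
    have hy : eF q y = (y.1.2.length * (A q y + 1) + eF q y) % (A q y + 1) := by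
      rw [mul_comm, Nat.mul_add_mod, Nat.mod_eq_of_lt (by omega)]
    rw [hx, hsum, ← hy]
  exact eF_inj q he

/-- the set of achieved codes -/
def P (q : Ordinal) : ℕ → Prop := fun n => n ∈ Set.range (cF q)

lemma P_infinite {q : Ordinal} (hq : q < omega1) : (setOf (P q)).Infinite := by
  have : Infinite (S q) := (infinite_S hq).to_subtype
  have : (Set.range (cF q)).Infinite := Set.infinite_range_of_injective (cF_inj q)
  exact this

/-- the final numbering within block `q` -/
noncomputable def phi (q : Ordinal) (x : S q) : ℕ := Nat.count (P q) (cF q x)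

lemma phi_lt {q : Ordinal} {x y : S q} (h : cF q y < cF q x) : phi q y < phi q x := by
  have hy : P q (cF q y) := ⟨y, rfl⟩
  calc Nat.count (P q) (cF q y) < Nat.count (P q) (cF q y + 1) :=
        Nat.count_lt_count_succ_iff.2 hy
    _ ≤ Nat.count (P q) (cF q x) := Nat.count_monotone _ h

lemma phi_inj (q : Ordinal) : Function.Injective (phi q) := by
  intro x y h
  apply cF_inj q
  rcases Nat.lt_trichotomy (cF q x) (cF q y) with hlt | heq | hlt
  · exact absurd h (Nat.ne_of_lt (phi_lt hlt))
  · exact heq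
  · exact absurd h.symm (Nat.ne_of_lt (phi_lt hlt))

lemma phi_surj {q : Ordinal} (hq : q < omega1) : Function.Surjective (phi q) := by
  intro m
  have hm : P q (Nat.nth (P q) m) := Nat.nth_mem_of_infinite (P_infinite hq) m
  obtain ⟨x, hx⟩ := hm
  exact ⟨x, by rw [phi, hx, Nat.count_nth_of_infinite (P_infinite hq)]⟩

lemma mem_S_self (x : ℕ × List O1) : x ∈ S (qOf x.2) := rfl

/-- the main map, as an ordinal -/
noncomputable def theta (x : ℕ × List O1) : Ordinal :=
  omega0 * qOf x.2 + phi (qOf x.2) ⟨x, mem_S_self x⟩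

lemma theta_lt_omega1 (x : ℕ × List O1) : theta x < omega1 :=
  block_lt_omega1 (qOf_lt_omega1 x.2) _

/-- the main map -/
noncomputable def Theta (x : ℕ × List O1) : O1 := ⟨theta x, theta_lt_omega1 x⟩

lemma theta_div (x : ℕ × List O1) : theta x / omega0 = qOf x.2 := by
  rw [theta, Ordinal.mul_add_div _ Ordinal.omega0_ne_zero,
    Ordinal.div_eq_zero_of_lt (Ordinal.nat_lt_omega0 _), add_zero]

lemma theta_mod (x : ℕ × List O1) :
    theta x % omega0 = (phi (qOf x.2) ⟨x, mem_S_self x⟩ : Ordinal) := by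
  rw [theta, Ordinal.mul_add_mod_self, Ordinal.mod_eq_of_lt (Ordinal.nat_lt_omega0 _)]

lemma phi_congr {q q' : Ordinal} (h : q = q') (x : ℕ × List O1) (hx : x ∈ S q)
    (hx' : x ∈ S q') : phi q ⟨x, hx⟩ = phi q' ⟨x, hx'⟩ := by
  subst h; rfl

lemma Theta_bij : Function.Bijective Theta := by
  constructor
  · intro x y h
    have h0 : theta x = theta y := congrArg Subtype.val h
    have hq : qOf x.2 = qOf y.2 := by
      rw [← theta_div x, ← theta_div y, h0]
    have hphi : phi (qOf x.2) ⟨x, mem_S_self x⟩ = phi (qOf x.2) ⟨y, hq ▸ mem_S_self y⟩ := by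
      have h1 : (phi (qOf x.2) ⟨x, mem_S_self x⟩ : Ordinal)
          = (phi (qOf y.2) ⟨y, mem_S_self y⟩ : Ordinal) := by
        rw [← theta_mod x, ← theta_mod y, h0]
      have h2 := Nat.cast_injective (R := Ordinal) h1
      rw [h2]
      exact phi_congr hq.symm y (mem_S_self y) _
    have := phi_inj _ hphi
    exact Subtype.ext_iff.1 this
  · intro α
    set q : Ordinal := α.1 / omega0 with hqdef
    have hq : q < omega1 := by
      have h1 : q ≤ α.1 := by
        calc q = 1 * q := (one_mul _).symm
          _ ≤ omega0 * q := mul_le_mul_left Ordinal.one_lt_omega0.le _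
          _ ≤ α.1 := Ordinal.mul_div_le _ _
      exact h1.trans_lt α.2
    obtain ⟨n, hn⟩ := Ordinal.lt_omega0.1 (Ordinal.mod_lt α.1 Ordinal.omega0_ne_zero)
    obtain ⟨x, hx⟩ := phi_surj hq n
    refine ⟨x.1, ?_⟩
    apply Subtype.ext
    show theta x.1 = α.1
    have hqx : qOf x.1.2 = q := x.2
    rw [theta, phi_congr hqx x.1 (mem_S_self x.1) x.2]
    have : (⟨x.1, x.2⟩ : S q) = x := Subtype.ext rfl
    rw [this, hx, hqx, ← hn, hqdef, Ordinal.div_add_mod]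

lemma limit_mod_omega0 {δ : Ordinal} (hδ : Order.IsSuccLimit δ) : δ % omega0 = 0 := by
  obtain ⟨n, hn⟩ := Ordinal.lt_omega0.1 (Ordinal.mod_lt δ Ordinal.omega0_ne_zero)
  rcases n with _ | m
  · simpa using hn
  · exfalso
    have h1 : δ = omega0 * (δ / omega0) + (m + 1 : ℕ) := by
      rw [← hn, Ordinal.div_add_mod]
    have h2 : δ = Order.succ (omega0 * (δ / omega0) + m) := by
      conv_lhs => rw [h1]
      push_cast
      rw [← add_assoc, Ordinal.add_one_eq_succ]
    have h3 : omega0 * (δ / omega0) + (m : ℕ) < δ := by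
      conv_rhs => rw [h2]
      exact Order.lt_succ _
    have h4 := hδ.succ_lt h3
    rw [← h2] at h4
    exact lt_irrefl _ h4

lemma add_nat_lt_limit {δ a : Ordinal} (hδ : Order.IsSuccLimit δ) (h : a < δ) (n : ℕ) :
    a + n < δ := by
  induction n with
  | zero => simpa using h
  | succ m ih =>
    have : a + ((m : ℕ) + 1 : ℕ) = Order.succ (a + m) := by
      push_cast
      rw [← add_assoc, Ordinal.add_one_eq_succ]
    rw [this]
    exact hδ.succ_lt ih

lemma mul_lt_limit_iff {δ q : Ordinal} (hδ : Order.IsSuccLimit δ) :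
    omega0 * q < δ ↔ omega0 * Order.succ q ≤ δ := by
  constructor
  · intro h
    have hδeq : omega0 * (δ / omega0) = δ := by
      have := Ordinal.div_add_mod δ omega0
      rwa [limit_mod_omega0 hδ, add_zero] at this
    rw [← hδeq] at h ⊢
    rw [mul_lt_mul_iff_right₀ Ordinal.omega0_pos] at h
    exact mul_le_mul_right (Order.succ_le_of_lt h) _
  · intro h
    calc omega0 * q < omega0 * Order.succ q := by
          rw [mul_lt_mul_iff_right₀ Ordinal.omega0_pos]
          exact Order.lt_succ _
      _ ≤ δ := h

lemma theta_lt_limit_iff {δ : Ordinal} (hδ : Order.IsSuccLimit δ) (x : ℕ × List O1) :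
    theta x < δ ↔ maxs x.2 < δ := by
  constructor
  · intro h
    have h1 : omega0 * qOf x.2 < δ := (le_self_add).trans_lt h
    have h2 := (mul_lt_limit_iff hδ).1 h1
    exact (Ordinal.lt_mul_succ_div _ Ordinal.omega0_ne_zero).trans_le h2
  · intro h
    have h1 : omega0 * qOf x.2 ≤ maxs x.2 := Ordinal.mul_div_le _ _
    have h2 : omega0 * qOf x.2 < δ := h1.trans_lt h
    exact add_nat_lt_limit hδ h2 _

end Stmt1Aux

open Stmt1Aux in
/-- There is a bijection `θ : ℕ × (ω₁)^{<ω} → ω₁` such that (i) for every countable limit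
ordinal `δ`, `θ` maps `ℕ × δ^{<ω}` onto `δ` (i.e. `θ(k, s) < δ` iff every entry of `s` is
below `δ`), and (ii) if `t` properly extends `s` then `θ(k, s) < θ(k, t)`. -/
theorem stmt1 :
    ∃ θ : ℕ × List O1 ≃ O1,
      (∀ δ : Ordinal, δ < omega1 → Order.IsSuccLimit δ →
        ∀ (k : ℕ) (s : List O1),
          ((θ (k, s) : O1) : Ordinal) < δ ↔ ∀ x ∈ s, ((x : O1) : Ordinal) < δ) ∧
      (∀ (k : ℕ) (s t : List O1), s <+: t → s ≠ t →
        ((θ (k, s) : O1) : Ordinal) < ((θ (k, t) : O1) : Ordinal)) := by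
  refine ⟨Equiv.ofBijective Theta Theta_bij, ?_, ?_⟩
  · intro δ hδ1 hδ2 k s
    have h1 : ((Equiv.ofBijective Theta Theta_bij (k, s) : O1) : Ordinal) = theta (k, s) := rfl
    rw [h1, theta_lt_limit_iff hδ2]
    exact maxs_lt hδ2.pos s
  · intro k s t hst hne
    have h1 : ((Equiv.ofBijective Theta Theta_bij (k, s) : O1) : Ordinal) = theta (k, s) := rfl
    have h2 : ((Equiv.ofBijective Theta Theta_bij (k, t) : O1) : Ordinal) = theta (k, t) := rfl
    rw [h1, h2]
    have hq : qOf s ≤ qOf t := by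
      rw [qOf, qOf]
      by_contra hcon
      push_neg at hcon
      have := (Ordinal.div_le Ordinal.omega0_ne_zero).2
        ((maxs_prefix_le hst).trans_lt (Ordinal.lt_mul_succ_div _ Ordinal.omega0_ne_zero))
      exact absurd this (not_le.2 hcon)
    rcases lt_or_eq_of_le hq with hlt | heq
    · calc theta (k, s)
          = omega0 * qOf s + ((phi (qOf s) ⟨(k, s), rfl⟩ : ℕ) : Ordinal) := rfl
        _ < omega0 * qOf s + omega0 := add_lt_add_right (Ordinal.nat_lt_omega0 _) _
        _ = omega0 * Order.succ (qOf s) := (Ordinal.mul_succ _ _).symm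
        _ ≤ omega0 * qOf t := mul_le_mul_right (Order.succ_le_of_lt hlt) _
        _ ≤ theta (k, t) := le_self_add
    · have hmono : phi (qOf s) ⟨(k, s), rfl⟩ < phi (qOf s) ⟨(k, t), heq.symm⟩ :=
        phi_lt (cF_lt ⟨rfl, hst⟩ hne)
      calc theta (k, s)
          = omega0 * qOf s + ((phi (qOf s) ⟨(k, s), rfl⟩ : ℕ) : Ordinal) := rfl
        _ < omega0 * qOf s + ((phi (qOf s) ⟨(k, t), heq.symm⟩ : ℕ) : Ordinal) :=
            add_lt_add_right (Nat.cast_lt.2 hmono) _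
        _ = omega0 * qOf t + ((phi (qOf t) ⟨(k, t), rfl⟩ : ℕ) : Ordinal) := by
            rw [phi_congr heq (k, t) heq.symm rfl, heq]
        _ = theta (k, t) := rfl
end

section
/- Let S be a stationary subset of the limit ordinals below ω₁, and for each α < ω₁ let σ(α) be the least element of S greater than α. Then there is a family ⟨ζ_α : α < ω₁⟩ such that each ζ_α : ω → σ(α) is strictly increasing with range cofinal in σ(α), ζ_α(0) > α, and for all α ≠ β the ranges of ζ_α and ζ_β are disjoint. -/
open Ordinal Set

def IsLadderOn (δ : Ordinal) (η : ℕ → Ordinal) : Prop :=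
  StrictMono η ∧ (∀ n, η n < δ) ∧ ∀ β < δ, ∃ n, β ≤ η n

def IsLadderAt (α : Ordinal) (η : ℕ → Ordinal) : Prop :=
  ∃ (δ : Ordinal) (n : ℕ), Order.IsSuccLimit δ ∧ α = δ + n ∧ IsLadderOn δ η

def IsClub' (C : Set Ordinal) : Prop :=
  C ⊆ Set.Iio omega1 ∧
  (∀ α < omega1, ∃ β ∈ C, α < β) ∧
  (∀ δ < omega1, Order.IsSuccLimit δ → (∀ α < δ, ∃ β ∈ C, α < β ∧ β < δ) → δ ∈ C)

def IsStat (S : Set Ordinal) : Prop := ∀ C, IsClub' C → (S ∩ C).Nonempty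

def UnifBelow (S : Set Ordinal) (η : Ordinal → ℕ → Ordinal) (h : Ordinal → ℕ → ℕ) : Prop :=
  ∀ c : Ordinal → ℕ → ℕ, (∀ α ∈ S, ∀ n, c α n < h α n) →
    ∃ (f : Ordinal → ℕ) (fs : Ordinal → ℕ), ∀ α ∈ S, ∀ n, fs α ≤ n → f (η α n) = c α n

def LambdaUnif (S : Set Ordinal) (η : Ordinal → ℕ → Ordinal) (l : ℕ) : Prop :=
  UnifBelow S η (fun _ _ => l)

def OmegaUnif (S : Set Ordinal) (η : Ordinal → ℕ → Ordinal) : Prop :=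
  ∀ c : Ordinal → ℕ → ℕ,
    ∃ (f : Ordinal → ℕ) (fs : Ordinal → ℕ), ∀ α ∈ S, ∀ n, fs α ≤ n → f (η α n) = c α n

def TreeLike (S : Set Ordinal) (η : Ordinal → ℕ → Ordinal) : Prop :=
  ∀ α ∈ S, ∀ β ∈ S, ∀ n m, η α n = η β m → n = m ∧ ∀ k ≤ n, η α k = η β k

def StronglyTreeLike (S : Set Ordinal) (η : Ordinal → ℕ → Ordinal) (F : Ordinal → ℕ) : Prop :=
  TreeLike S η ∧ ∀ α ∈ S, ∀ β ∈ S, ∀ n m, η α n = η β m → F α = F β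

/-- Sets of ordinals below `omega1` are countable. -/
theorem aux_countable_Iio (δ : Ordinal) (h : δ < omega1) : (Set.Iio δ).Countable := by
  rw [Cardinal.countable_iff_lt_aleph_one, Ordinal.mk_Iio_ordinal]
  have h1 : δ.card < Cardinal.aleph 1 := Cardinal.lt_ord.mp h
  have := Cardinal.lift_lt.mpr h1
  rwa [Cardinal.lift_aleph, Ordinal.lift_one] at this

/-- Every countable limit ordinal carries a ladder. -/
theorem aux_ladder_exists (δ : Ordinal) (h1 : δ < omega1) (h2 : Order.IsSuccLimit δ) :
    ∃ E : ℕ → Ordinal, IsLadderOn δ E := by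
  have hc : Countable (Set.Iio δ) := (aux_countable_Iio δ h1).to_subtype
  have hne : Nonempty (Set.Iio δ) := ⟨⟨0, h2.pos⟩⟩
  obtain ⟨f, hf⟩ := exists_surjective_nat (Set.Iio δ)
  let E : ℕ → Ordinal := fun n => Nat.rec ((f 0 : Ordinal)) (fun n En => max ((f (n+1) : Ordinal)) (Order.succ En)) n
  have hEstep : ∀ n, E (n + 1) = max ((f (n+1) : Ordinal)) (Order.succ (E n)) := fun n => rfl
  have hElt : ∀ n, E n < δ := by
    intro n
    induction n with
    | zero => exact (f 0).2
    | succ n ih =>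
      rw [hEstep]
      exact max_lt (f (n+1)).2 (h2.succ_lt ih)
  have hmono : StrictMono E := by
    apply strictMono_nat_of_lt_succ
    intro n
    calc E n < Order.succ (E n) := Order.lt_succ _
      _ ≤ E (n + 1) := by rw [hEstep]; exact le_max_right _ _
  have hge : ∀ n, (f n : Ordinal) ≤ E n := by
    intro n
    cases n with
    | zero => exact le_rfl
    | succ n => rw [hEstep]; exact le_max_left _ _
  refine ⟨E, hmono, hElt, ?_⟩
  intro β hβ
  obtain ⟨n, hn⟩ := hf ⟨β, hβ⟩
  refine ⟨n, ?_⟩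
  have h' := hge n
  rw [hn] at h'
  exact h'

/-- Given a stationary `S ⊆ lim(ω₁)` with `σ(α)` the least element of `S` above `α`,
there are pairwise disjoint ladders `ζ_α` on `σ(α)` with `ζ_α(0) > α`. -/
theorem stmt3 (S : Set Ordinal)
    (hS : ∀ δ ∈ S, δ < omega1 ∧ Order.IsSuccLimit δ) (hstat : IsStat S)
    (σ : Ordinal → Ordinal)
    (hσ : ∀ α < omega1, σ α ∈ S ∧ α < σ α ∧ ∀ β ∈ S, α < β → σ α ≤ β) :
    ∃ ζ : Ordinal → ℕ → Ordinal,
      (∀ α < omega1, IsLadderOn (σ α) (ζ α) ∧ α < ζ α 0) ∧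
      ∀ α < omega1, ∀ β < omega1, α ≠ β →
        Disjoint (Set.range (ζ α)) (Set.range (ζ β)) := by
  classical
  -- master ladders on each countable limit ordinal
  have hlad : ∀ δ : Ordinal, ∃ E : ℕ → Ordinal, δ < omega1 → Order.IsSuccLimit δ → IsLadderOn δ E := by
    intro δ
    by_cases h : δ < omega1 ∧ Order.IsSuccLimit δ
    · obtain ⟨E, hE⟩ := aux_ladder_exists δ h.1 h.2
      exact ⟨E, fun _ _ => hE⟩
    · exact ⟨fun _ => 0, fun h1 h2 => absurd ⟨h1, h2⟩ h⟩
  choose E hE using hlad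
  -- injections into ℕ below each countable ordinal
  have hinjex : ∀ δ : Ordinal, ∃ g : Ordinal → ℕ, δ < omega1 → Set.InjOn g (Set.Iio δ) := by
    intro δ
    by_cases h : δ < omega1
    · have hc : Countable (Set.Iio δ) := (aux_countable_Iio δ h).to_subtype
      obtain ⟨g0, hg0⟩ := Countable.exists_injective_nat (Set.Iio δ)
      refine ⟨fun x => if hx : x < δ then g0 ⟨x, hx⟩ else 0, fun _ x hx y hy hxy => ?_⟩
      simp only [dif_pos (show x < δ from hx), dif_pos (show y < δ from hy)] at hxy
      exact congrArg Subtype.val (hg0 hxy)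
    · exact ⟨fun _ => 0, fun h' => absurd h' h⟩
  choose g hg using hinjex
  -- offsets
  have hmex : ∀ α : Ordinal, ∃ k : ℕ, α < omega1 → α < E (σ α) k := by
    intro α
    by_cases hα : α < omega1
    · obtain ⟨hσS, hασ, _⟩ := hσ α hα
      obtain ⟨hδ1, hδ2⟩ := hS _ hσS
      obtain ⟨hmono, _, hcof⟩ := hE (σ α) hδ1 hδ2
      obtain ⟨n, hn⟩ := hcof α hασ
      exact ⟨n + 1, fun _ => lt_of_le_of_lt hn (hmono (Nat.lt_succ_self n))⟩
    · exact ⟨0, fun h => absurd h hα⟩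
  choose m hm using hmex
  -- the ladders
  refine ⟨fun α n => E (σ α) (Nat.pair (g (σ α) α) (n + m α)), ?_, ?_⟩
  · -- ladder properties
    intro α hα
    obtain ⟨hσS, hασ, _⟩ := hσ α hα
    obtain ⟨hδ1, hδ2⟩ := hS _ hσS
    obtain ⟨hmono, hlt, hcof⟩ := hE (σ α) hδ1 hδ2
    refine ⟨⟨?_, fun n => hlt _, ?_⟩, ?_⟩
    · intro a b hab
      exact hmono (Nat.pair_lt_pair_right _ (by omega))
    · intro β hβ
      obtain ⟨n, hn⟩ := hcof β hβ
      exact ⟨n, hn.trans (hmono.monotone ((Nat.le_add_right n (m α)).trans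
        (Nat.right_le_pair _ _)))⟩
    · exact lt_of_lt_of_le (hm α hα)
        (hmono.monotone (by simpa using Nat.right_le_pair (g (σ α) α) (0 + m α)))
  · -- disjointness
    have hgt : ∀ α, α < omega1 → ∀ n, α < E (σ α) (Nat.pair (g (σ α) α) (n + m α)) := by
      intro α hα n
      obtain ⟨hσS, hασ, _⟩ := hσ α hα
      obtain ⟨hδ1, hδ2⟩ := hS _ hσS
      obtain ⟨hmono, _, _⟩ := hE (σ α) hδ1 hδ2
      exact lt_of_lt_of_le (hm α hα)
        (hmono.monotone ((Nat.le_add_left (m α) n).trans (Nat.right_le_pair _ _)))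
    have sep : ∀ a, a < omega1 → ∀ b, b < omega1 → σ a < σ b → σ a ≤ b := by
      intro a ha b hb hab
      by_contra hcon
      push_neg at hcon
      exact absurd ((hσ b hb).2.2 (σ a) (hσ a ha).1 hcon) (not_le.mpr hab)
    intro α hα β hβ hne
    rw [Set.disjoint_left]
    rintro v ⟨n, rfl⟩ ⟨k, hk⟩
    dsimp only at hk
    obtain ⟨hσSα, hασ, _⟩ := hσ α hα
    obtain ⟨hδ1α, hδ2α⟩ := hS _ hσSα
    obtain ⟨hσSβ, hβσ, _⟩ := hσ β hβ
    obtain ⟨hδ1β, hδ2β⟩ := hS _ hσSβ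
    obtain ⟨hmonoα, hltα, _⟩ := hE (σ α) hδ1α hδ2α
    rcases lt_trichotomy (σ α) (σ β) with hcase | hcase | hcase
    · -- σ α < σ β : value < σ α ≤ β < value
      have h1 : E (σ β) (Nat.pair (g (σ β) β) (k + m β)) < σ α := by
        rw [hk]; exact hltα _
      have h2 := hgt β hβ k
      have h3 : σ α ≤ β := sep α hα β hβ hcase
      exact absurd h1 (not_lt.mpr (h3.trans h2.le))
    · -- σ α = σ β : use injectivity
      have hinj := hmonoα.injective
      rw [← hcase] at hk
      have hpair := Nat.pair_eq_pair.mp (hinj hk)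
      have hgeq : g (σ α) β = g (σ α) α := hpair.1
      have hβmem : β < σ α := by rw [hcase]; exact hβσ
      exact hne (hg (σ α) hδ1α hβmem hασ hgeq).symm
    · -- σ β < σ α
      have hσβlt : σ β ≤ α := sep β hβ α hα hcase
      obtain ⟨hmonoβ, hltβ, _⟩ := hE (σ β) hδ1β hδ2β
      have h1 : E (σ β) (Nat.pair (g (σ β) β) (k + m β)) < σ β := hltβ _
      have h2 : α < E (σ β) (Nat.pair (g (σ β) β) (k + m β)) := by
        rw [hk]; exact hgt α hα n
      exact absurd (lt_of_lt_of_le h1 hσβlt) (not_lt.mpr h2.le)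
end

section
/- Suppose there is a ladder system ζ = ⟨ζ_α : α ∈ S⟩ on a set S ⊇ lim(ω₁) satisfying H-uniformization, for a family H = ⟨h_α : α ∈ S⟩ of functions h_α : ω → ω. Then for any function F : S → ω, there is a ladder system η = ⟨η_α : α ∈ S⟩ on S which is strongly tree-like with respect to F and also satisfies H-uniformization. -/
open Ordinal Set

section Aux
universe u
open Cardinal

lemma omega1_isLimit : Order.IsSuccLimit (omega1 : Ordinal.{u}) :=
  Cardinal.isSuccLimit_ord (by simpa using Cardinal.aleph0_lt_aleph_one.le)

lemma countable_Iio_of_lt {o : Ordinal.{u}} (h : o < omega1) : (Set.Iio o).Countable := by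
  have h1 : o.card ≤ ℵ₀ := by
    have := Cardinal.lt_ord.1 h
    rwa [← Cardinal.succ_aleph0, Order.lt_succ_iff] at this
  have h2 : #(Set.Iio o) ≤ ℵ₀ := by
    rw [Ordinal.mk_Iio_ordinal]
    simpa using Cardinal.lift_le.2 h1
  exact Set.countable_coe_iff.mp (Cardinal.mk_le_aleph0_iff.1 h2)

lemma add_omega0_lt_omega1 {o : Ordinal.{u}} (h : o < omega1) :
    o + Ordinal.omega0 < omega1 := by
  rw [omega1, Cardinal.lt_ord] at h ⊢
  rw [Ordinal.card_add, Ordinal.card_omega0]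
  have : o.card ≤ ℵ₀ := by rwa [← Cardinal.succ_aleph0, Order.lt_succ_iff] at h
  calc o.card + ℵ₀ ≤ ℵ₀ + ℵ₀ := add_le_add_left this _
    _ = ℵ₀ := by simp
    _ < Cardinal.aleph 1 := aleph0_lt_aleph_one

/-- The "limit part" of an ordinal. -/
noncomputable def limPart (a : Ordinal.{u}) : Ordinal.{u} :=
  Ordinal.omega0 * (a / Ordinal.omega0)

lemma limPart_le (a : Ordinal.{u}) : limPart a ≤ a := Ordinal.mul_div_le a _

lemma lt_limPart_add (a : Ordinal.{u}) : a < limPart a + Ordinal.omega0 := by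
  conv_lhs => rw [← Ordinal.div_add_mod a Ordinal.omega0]
  exact add_lt_add_right (Ordinal.mod_lt a Ordinal.omega0_ne_zero) _

/-- The finite part of an ordinal, as a natural number. -/
noncomputable def finPart (a : Ordinal.{u}) : ℕ :=
  (Ordinal.lt_omega0.1 (Ordinal.mod_lt a Ordinal.omega0_ne_zero)).choose

lemma finPart_spec (a : Ordinal.{u}) : a % Ordinal.omega0 = (finPart a : Ordinal) :=
  (Ordinal.lt_omega0.1 (Ordinal.mod_lt a Ordinal.omega0_ne_zero)).choose_spec

lemma limPart_add_finPart (a : Ordinal.{u}) : limPart a + (finPart a : Ordinal) = a := by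
  rw [← finPart_spec]; exact Ordinal.div_add_mod a _

lemma limPart_limPart (a : Ordinal.{u}) : limPart (limPart a) = limPart a := by
  rw [limPart, limPart, Ordinal.mul_div_cancel _ Ordinal.omega0_ne_zero]

lemma limPart_eq_of_between {l a : Ordinal.{u}} (hl : limPart l = l) (h1 : l ≤ a)
    (h2 : a < l + Ordinal.omega0) : limPart a = l := by
  have hle : l / Ordinal.omega0 ≤ a / Ordinal.omega0 := Ordinal.div_le_left h1 _
  have hge : a / Ordinal.omega0 ≤ l / Ordinal.omega0 := by
    by_contra hc
    push_neg at hc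
    have h3 : l + Ordinal.omega0 ≤ a := by
      have hsucc : Order.succ (l / Ordinal.omega0) ≤ a / Ordinal.omega0 :=
        Order.succ_le_of_lt hc
      calc l + Ordinal.omega0 = limPart l + Ordinal.omega0 := by rw [hl]
        _ = Ordinal.omega0 * Order.succ (l / Ordinal.omega0) := by
            rw [limPart, Ordinal.mul_succ]
        _ ≤ Ordinal.omega0 * (a / Ordinal.omega0) := mul_le_mul_right hsucc _
        _ ≤ a := Ordinal.mul_div_le a _
    exact absurd h3 (not_le.2 h2)
  have hd : a / Ordinal.omega0 = l / Ordinal.omega0 := le_antisymm hge hle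
  rw [limPart, hd, ← limPart, hl]

lemma limPart_add_omega0_le {x y : Ordinal.{u}} (h : limPart x < limPart y) :
    limPart x + Ordinal.omega0 ≤ limPart y := by
  have hq : x / Ordinal.omega0 < y / Ordinal.omega0 :=
    (mul_lt_mul_iff_right₀ Ordinal.omega0_pos).1 h
  calc limPart x + Ordinal.omega0 = Ordinal.omega0 * Order.succ (x / Ordinal.omega0) := by
        rw [limPart, Ordinal.mul_succ]
    _ ≤ Ordinal.omega0 * (y / Ordinal.omega0) := mul_le_mul_right (Order.succ_le_of_lt hq) _
    _ = limPart y := rfl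

/-- The window of triples associated to a limit part `l`. -/
def Wset (l : Ordinal.{u}) : Set (ℕ × Ordinal.{u} × Ordinal.{u}) :=
  {x | x.2.1 < l + Ordinal.omega0 ∧ x.2.2 < l + Ordinal.omega0}

lemma Wset_countable {l : Ordinal.{u}} (h : l + Ordinal.omega0 < omega1) :
    (Wset l).Countable := by
  have hI : (Set.Iio (l + Ordinal.omega0)).Countable := countable_Iio_of_lt h
  have hsub : Wset l ⊆ (Set.univ : Set ℕ) ×ˢ ((Set.Iio (l + Ordinal.omega0)) ×ˢ
      (Set.Iio (l + Ordinal.omega0))) := by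
    rintro ⟨n, a, b⟩ ⟨ha, hb⟩
    exact ⟨trivial, ha, hb⟩
  exact Set.Countable.mono hsub (Set.countable_univ.prod (hI.prod hI))

noncomputable def wFun (l : Ordinal.{u}) : (Wset l) → ℕ :=
  @dite _ (∃ f : (Wset l) → ℕ, Function.Injective f) (Classical.propDecidable _)
    (fun h => h.choose) (fun _ => fun _ => 0)

noncomputable def wInj (l : Ordinal.{u}) (x : ℕ × Ordinal.{u} × Ordinal.{u}) : ℕ :=
  @dite _ (x ∈ Wset l) (Classical.propDecidable _) (fun hx => wFun l ⟨x, hx⟩) (fun _ => 0)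

lemma wInj_injOn {l : Ordinal.{u}} (h : l + Ordinal.omega0 < omega1)
    {x y : ℕ × Ordinal.{u} × Ordinal.{u}}
    (hx : x ∈ Wset l) (hy : y ∈ Wset l) (e : wInj l x = wInj l y) : x = y := by
  have hex : ∃ f : (Wset l) → ℕ, Function.Injective f :=
    Set.countable_iff_exists_injective.1 (Wset_countable h)
  rw [wInj, wInj, dif_pos hx, dif_pos hy] at e
  rw [wFun, dif_pos hex] at e
  have := hex.choose_spec e
  exact congrArg Subtype.val this

/-- The coding function. -/
noncomputable def code (n : ℕ) (a b : Ordinal.{u}) : Ordinal.{u} :=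
  limPart (max a b) +
    ((Nat.pair (wInj (limPart (max a b)) (n, a, b)) (finPart a + finPart b + 1) : ℕ) : Ordinal)

lemma limPart_cmp (a m : Ordinal.{u}) (h : a ≤ m) :
    limPart a = limPart m ∨ a < limPart m := by
  rcases lt_or_ge a (limPart m) with h1 | h1
  · exact Or.inr h1
  · exact Or.inl (limPart_eq_of_between (limPart_limPart m) h1
      (lt_of_le_of_lt h (lt_limPart_add m)))

lemma lt_code_of_le {n : ℕ} {a b c : Ordinal.{u}} (hc : c ≤ max a b)
    (hfp : finPart c < finPart a + finPart b + 1) : c < code n a b := by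
  rcases limPart_cmp c (max a b) hc with hcc | hcc
  · have hc2 : c = limPart (max a b) + (finPart c : Ordinal) := by
      rw [← hcc, limPart_add_finPart]
    rw [code, hc2]
    apply add_lt_add_right
    have hlt : finPart c < Nat.pair (wInj (limPart (max a b)) (n, a, b))
        (finPart a + finPart b + 1) :=
      lt_of_lt_of_le hfp (Nat.right_le_pair _ _)
    exact_mod_cast hlt
  · exact lt_of_lt_of_le hcc (le_add_right le_rfl)

lemma lt_code_left (n : ℕ) (a b : Ordinal.{u}) : a < code n a b :=
  lt_code_of_le (le_max_left a b) (by omega)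

lemma lt_code_right (n : ℕ) (a b : Ordinal.{u}) : b < code n a b :=
  lt_code_of_le (le_max_right a b) (by omega)

lemma add_nat_lt {δ a : Ordinal.{u}} (hδ : Order.IsSuccLimit δ) (ha : a < δ) (n : ℕ) :
    a + (n : Ordinal) < δ := by
  induction n with
  | zero => simpa using ha
  | succ k ih =>
      have h1 : a + ((k + 1 : ℕ) : Ordinal) = Order.succ (a + (k : Ordinal)) := by
        push_cast
        rw [← add_assoc, Order.succ_eq_add_one]
      rw [h1]
      exact hδ.succ_lt ih

lemma code_lt {δ : Ordinal.{u}} (hδ : Order.IsSuccLimit δ) {a b : Ordinal.{u}} (ha : a < δ) (hb : b < δ)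
    (n : ℕ) : code n a b < δ := by
  have hm : max a b < δ := max_lt ha hb
  exact lt_of_le_of_lt (add_le_add_left (limPart_le _) _) (add_nat_lt hδ hm _)

lemma code_lt_omega1 {a b : Ordinal.{u}} (ha : a < omega1) (hb : b < omega1) (n : ℕ) :
    code n a b < omega1 :=
  code_lt omega1_isLimit ha hb n

lemma code_inj {n m : ℕ} {a b a' b' : Ordinal.{u}} (ha : a < omega1) (hb : b < omega1)
    (ha' : a' < omega1) (hb' : b' < omega1) (h : code n a b = code m a' b') :
    n = m ∧ a = a' ∧ b = b' := by
  have hlo : limPart (max a b) + Ordinal.omega0 < omega1 :=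
    add_omega0_lt_omega1 (lt_of_le_of_lt (limPart_le _) (max_lt ha hb))
  have hll : limPart (max a b) = limPart (max a' b') := by
    rcases lt_trichotomy (limPart (max a b)) (limPart (max a' b')) with hc | hc | hc
    · exfalso
      have h1 : code n a b < limPart (max a' b') := by
        refine lt_of_lt_of_le ?_ (limPart_add_omega0_le hc)
        rw [code]
        exact add_lt_add_right (Ordinal.nat_lt_omega0 _) _
      rw [h] at h1
      exact absurd (lt_of_lt_of_le h1 (le_add_right le_rfl)) (lt_irrefl _)
    · exact hc
    · exfalso
      have h1 : code m a' b' < limPart (max a b) := by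
        refine lt_of_lt_of_le ?_ (limPart_add_omega0_le hc)
        rw [code]
        exact add_lt_add_right (Ordinal.nat_lt_omega0 _) _
      rw [← h] at h1
      exact absurd (lt_of_lt_of_le h1 (le_add_right le_rfl)) (lt_irrefl _)
  rw [code, code, ← hll] at h
  have hg : ((Nat.pair (wInj (limPart (max a b)) (n, a, b)) (finPart a + finPart b + 1) : ℕ)
      : Ordinal) = ((Nat.pair (wInj (limPart (max a b)) (m, a', b'))
      (finPart a' + finPart b' + 1) : ℕ) : Ordinal) :=
    add_left_cancel_iff.1 h
  have hgn : Nat.pair (wInj (limPart (max a b)) (n, a, b)) (finPart a + finPart b + 1) =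
      Nat.pair (wInj (limPart (max a b)) (m, a', b')) (finPart a' + finPart b' + 1) := by
    exact_mod_cast hg
  have hw : wInj (limPart (max a b)) (n, a, b) = wInj (limPart (max a b)) (m, a', b') :=
    (Nat.pair_eq_pair.1 hgn).1
  have hmem : (n, a, b) ∈ Wset (limPart (max a b)) :=
    ⟨lt_of_le_of_lt (le_max_left a b) (lt_limPart_add _),
     lt_of_le_of_lt (le_max_right a b) (lt_limPart_add _)⟩
  have hmem' : (m, a', b') ∈ Wset (limPart (max a b)) := by
    rw [hll]
    exact ⟨lt_of_le_of_lt (le_max_left a' b') (lt_limPart_add _),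
      lt_of_le_of_lt (le_max_right a' b') (lt_limPart_add _)⟩
  have heq := wInj_injOn hlo hmem hmem' hw
  simp only [Prod.mk.injEq] at heq
  exact ⟨heq.1, heq.2.1, heq.2.2⟩

end Aux

section Eta
universe u

/-- The tree-like ladder system obtained by coding prefixes of `ζ` together with `F`. -/
noncomputable def eta (F : Ordinal.{u} → ℕ) (ζ : Ordinal.{u} → ℕ → Ordinal.{u})
    (α : Ordinal.{u}) : ℕ → Ordinal.{u}
  | 0 => code 0 (F α) (ζ α 0)
  | n + 1 => code (n + 1) (eta F ζ α n) (ζ α (n + 1))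

variable {F : Ordinal.{u} → ℕ} {ζ : Ordinal.{u} → ℕ → Ordinal.{u}}

lemma zeta_lt_eta (α : Ordinal.{u}) (n : ℕ) : ζ α n < eta F ζ α n := by
  cases n with
  | zero => exact lt_code_right _ _ _
  | succ k => exact lt_code_right _ _ _

lemma eta_lt_succ (α : Ordinal.{u}) (n : ℕ) : eta F ζ α n < eta F ζ α (n + 1) :=
  lt_code_left _ _ _

lemma eta_strictMono (α : Ordinal.{u}) : StrictMono (eta F ζ α) :=
  strictMono_nat_of_lt_succ (eta_lt_succ α)

lemma eta_lt_delta {δ : Ordinal.{u}} (hδ : Order.IsSuccLimit δ) {α : Ordinal.{u}}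
    (hζδ : ∀ n, ζ α n < δ) (n : ℕ) : eta F ζ α n < δ := by
  induction n with
  | zero =>
      exact code_lt hδ (lt_of_lt_of_le (Ordinal.nat_lt_omega0 _) (omega0_le_of_isSuccLimit hδ))
        (hζδ 0) 0
  | succ k ih => exact code_lt hδ ih (hζδ (k + 1)) _

end Eta

section Inj
universe u
variable {F : Ordinal.{u} → ℕ} {ζ : Ordinal.{u} → ℕ → Ordinal.{u}}

lemma natCast_lt_omega1 (j : ℕ) : ((j : ℕ) : Ordinal.{u}) < omega1 :=
  lt_of_lt_of_le (Ordinal.nat_lt_omega0 _) (Ordinal.omega0_le_of_isSuccLimit omega1_isLimit)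

lemma eta_inj {α β : Ordinal.{u}} (hα1 : ∀ k, eta F ζ α k < omega1)
    (hα2 : ∀ k, ζ α k < omega1) (hβ1 : ∀ k, eta F ζ β k < omega1)
    (hβ2 : ∀ k, ζ β k < omega1) :
    ∀ n m, eta F ζ α n = eta F ζ β m →
      n = m ∧ F α = F β ∧ ∀ k ≤ n, eta F ζ α k = eta F ζ β k := by
  intro n
  induction n with
  | zero =>
      intro m hm
      cases m with
      | zero =>
          obtain ⟨-, h2, -⟩ :=
            code_inj (natCast_lt_omega1 (F α)) (hα2 0) (natCast_lt_omega1 (F β)) (hβ2 0) hm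
          refine ⟨rfl, by exact_mod_cast h2, ?_⟩
          intro k hk
          interval_cases k
          exact hm
      | succ m' =>
          obtain ⟨h1, -, -⟩ :=
            code_inj (natCast_lt_omega1 (F α)) (hα2 0) (hβ1 m') (hβ2 (m' + 1)) hm
          exact absurd h1 (by omega)
  | succ n' ih =>
      intro m hm
      cases m with
      | zero =>
          obtain ⟨h1, -, -⟩ :=
            code_inj (hα1 n') (hα2 (n' + 1)) (natCast_lt_omega1 (F β)) (hβ2 0) hm
          exact absurd h1 (by omega)
      | succ m' =>
          obtain ⟨h1, h2, -⟩ :=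
            code_inj (hα1 n') (hα2 (n' + 1)) (hβ1 m') (hβ2 (m' + 1)) hm
          have hnm : n' = m' := by omega
          subst hnm
          obtain ⟨-, hFq, hks⟩ := ih n' h2
          refine ⟨rfl, hFq, ?_⟩
          intro k hk
          rcases Nat.lt_succ_iff_lt_or_eq.1 (Nat.lt_succ_of_le hk) with hk' | hk'
          · exact hks k (Nat.lt_succ_iff.1 hk')
          · subst hk'; exact hm

end Inj

/-- If a ladder system `ζ` on `S ⊇ lim(ω₁)` (with `S ⊆ [ω, ω₁)`) satisfies
`H`-uniformization, then for any `F : S → ω` there is a ladder system `η` on `S` which is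
strongly tree-like w.r.t. `F` and satisfies `H`-uniformization. -/
theorem stmt4 (S : Set Ordinal)
    (hS₁ : ∀ δ, δ < omega1 → Order.IsSuccLimit δ → δ ∈ S)
    (hS₂ : S ⊆ Set.Ico (Ordinal.omega0) omega1)
    (ζ : Ordinal → ℕ → Ordinal) (hζ : ∀ α ∈ S, IsLadderAt α (ζ α))
    (h : Ordinal → ℕ → ℕ) (hunif : UnifBelow S ζ h)
    (F : Ordinal → ℕ) :
    ∃ η : Ordinal → ℕ → Ordinal,
      (∀ α ∈ S, IsLadderAt α (η α)) ∧
      StronglyTreeLike S η F ∧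
      UnifBelow S η h := by
  have main : ∀ α ∈ S, ∃ δ : Ordinal, ∃ n₀ : ℕ, Order.IsSuccLimit δ ∧ α = δ + (n₀ : Ordinal) ∧ δ ≤ α ∧
      (∀ k, ζ α k < δ) ∧ IsLadderOn δ (eta F ζ α) := by
    intro α hα
    obtain ⟨δ, n₀, hδlim, hαeq, hm, hl, hc⟩ := hζ α hα
    refine ⟨δ, n₀, hδlim, hαeq, ?_, hl, eta_strictMono α,
      fun k => eta_lt_delta hδlim hl k, ?_⟩
    · rw [hαeq]; exact le_add_right le_rfl
    · intro b hb
      obtain ⟨k, hk⟩ := hc b hb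
      exact ⟨k, hk.trans (zeta_lt_eta α k).le⟩
  have hbound : ∀ α ∈ S, (∀ k, eta F ζ α k < omega1) ∧ (∀ k, ζ α k < omega1) := by
    intro α hα
    obtain ⟨δ, n₀, -, -, hδle, hζδ, -, hηδ, -⟩ := main α hα
    have hαω : α < omega1 := (hS₂ hα).2
    have hδω : δ < omega1 := lt_of_le_of_lt hδle hαω
    exact ⟨fun k => (hηδ k).trans hδω, fun k => (hζδ k).trans hδω⟩
  refine ⟨eta F ζ, ?_, ⟨?_, ?_⟩, ?_⟩
  · intro α hα
    obtain ⟨δ, n₀, hδlim, hαeq, -, -, hlad⟩ := main α hα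
    exact ⟨δ, n₀, hδlim, hαeq, hlad⟩
  · intro α hα β hβ n m hnm
    obtain ⟨h1, -, h3⟩ := eta_inj (hbound α hα).1 (hbound α hα).2 (hbound β hβ).1
      (hbound β hβ).2 n m hnm
    exact ⟨h1, h3⟩
  · intro α hα β hβ n m hnm
    exact (eta_inj (hbound α hα).1 (hbound α hα).2 (hbound β hβ).1
      (hbound β hβ).2 n m hnm).2.1
  · intro c hc
    obtain ⟨f, fs, hf⟩ := hunif c hc
    refine ⟨fun γ => @dite _ (∃ x : ℕ × Ordinal × Ordinal,
      x.2.1 < omega1 ∧ x.2.2 < omega1 ∧ code x.1 x.2.1 x.2.2 = γ)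
      (Classical.propDecidable _) (fun hg => f hg.choose.2.2) (fun _ => 0), fs, ?_⟩
    intro α hα n hn
    obtain ⟨p, hp, hpe⟩ : ∃ p, p < omega1 ∧ eta F ζ α n = code n p (ζ α n) := by
      cases n with
      | zero => exact ⟨(F α : Ordinal), natCast_lt_omega1 (F α), rfl⟩
      | succ k => exact ⟨eta F ζ α k, (hbound α hα).1 k, rfl⟩
    have hex : ∃ x : ℕ × Ordinal × Ordinal,
        x.2.1 < omega1 ∧ x.2.2 < omega1 ∧ code x.1 x.2.1 x.2.2 = eta F ζ α n :=
      ⟨(n, p, ζ α n), hp, (hbound α hα).2 n, hpe.symm⟩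
    dsimp only
    rw [dif_pos hex]
    obtain ⟨h1, h2, h3⟩ := hex.choose_spec
    have heq := code_inj h1 h2 hp ((hbound α hα).2 n) (h3.trans hpe)
    rw [heq.2.2]
    exact hf α hα n hn
end

section
/- Suppose f : ω₁ → λ uniformizes a coloring c of a tree-like ladder system η on S with minimal f*, i.e., f*(α) is the least k such that f(η_α(n)) = c_α(n) for all n ≥ k. If there exists n ≥ max(f*(α), f*(β)) with η_α(n) = η_β(n) and c_α ↾ [n, ω) and c_β ↾ [n, ω) satisfy c_α(m) = c_β(m) whenever η_α(m) = η_β(m) for m ≥ n, and moreover c_α(n) determines c_α ↾ n (i.e., the coloring is injectively coded so that c_α(n) = c_β(n) implies c_α ↾ n = c_β ↾ n), then f*(α) = f*(β). -/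
open Ordinal Set

/-- If `f` uniformizes a (suitably injectively coded) coloring `c` of a tree-like ladder
system `η` with minimal `f*`, and `η_α(n) = η_β(n)` for some `n ≥ max(f*(α), f*(β))`,
where the colorings are compatible above `n` and `c_α(n) = c_β(n)` determines
`c_α ↾ n = c_β ↾ n`, then `f*(α) = f*(β)`. -/
theorem stmt11 (S : Set Ordinal) (η : Ordinal → ℕ → Ordinal)
    (hladder : ∀ α ∈ S, IsLadderAt α (η α))
    (htree : TreeLike S η)
    (c : Ordinal → ℕ → ℕ) (f : Ordinal → ℕ) (fs : Ordinal → ℕ)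
    (hunif : ∀ α ∈ S, ∀ n, fs α ≤ n → f (η α n) = c α n)
    (hmin : ∀ α ∈ S, ∀ k, (∀ n, k ≤ n → f (η α n) = c α n) → fs α ≤ k)
    (α β : Ordinal) (hα : α ∈ S) (hβ : β ∈ S)
    (n : ℕ) (hn : max (fs α) (fs β) ≤ n) (heq : η α n = η β n)
    (hcompat : ∀ m, n ≤ m → η α m = η β m → c α m = c β m)
    (hcode : ∀ γ ∈ S, ∀ γ' ∈ S, ∀ j, c γ j = c γ' j → ∀ i < j, c γ i = c γ' i) :
    fs α = fs β := by
  have hmax := hn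
  have hfa : fs α ≤ n := le_trans (le_max_left _ _) hn
  have hfb : fs β ≤ n := le_trans (le_max_right _ _) hn
  have hagree : ∀ k ≤ n, η α k = η β k := (htree α hα β hβ n n heq).2
  have hcn : c α n = c β n := hcompat n le_rfl heq
  have hci : ∀ i ≤ n, c α i = c β i := by
    intro i hi
    rcases lt_or_eq_of_le hi with h | h
    · exact hcode α hα β hβ n hcn i h
    · rw [h]; exact hcn
  have key : ∀ γ γ', γ ∈ S → γ' ∈ S → fs γ ≤ n → fs γ' ≤ n →
      (∀ k ≤ n, η γ k = η γ' k) → (∀ i ≤ n, c γ i = c γ' i) → fs γ' ≤ fs γ := by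
    intro γ γ' hγ hγ' hfγ hfγ' hag hc
    apply hmin γ' hγ'
    intro m hm
    rcases le_or_gt m n with h | h
    · rw [← hag m h, ← hc m h]
      exact hunif γ hγ m hm
    · exact hunif γ' hγ' m (le_trans hfγ' h.le)
  have h1 := key α β hα hβ hfa hfb hagree hci
  have h2 := key β α hβ hα hfb hfa (fun k hk => (hagree k hk).symm)
      (fun i hi => (hci i hi).symm)
  exact le_antisymm h2 h1
end

section
/- Suppose E ⊆ [ω, ω₁) and η is a ladder system on E whose ladders consist of isolated points (points not in E) and which satisfies 2-uniformization. Then the topological space X(η) is normal. -/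
open Ordinal Set

/-- The ladder-system topology `X(η)` on `ω₁`: points outside `E` are isolated, and a set
`U` is open iff for every `α ∈ U ∩ E` it contains a tail of the ladder at `α`. -/
def ladderTop (E : Set O1) (η : O1 → ℕ → O1) : TopologicalSpace O1 where
  IsOpen U := ∀ α ∈ U, α ∈ E → ∃ n : ℕ, ∀ m, n ≤ m → η α m ∈ U
  isOpen_univ := fun _ _ _ => ⟨0, fun _ _ => Set.mem_univ _⟩
  isOpen_inter := by
    intro U V hU hV α hα hαE
    obtain ⟨n, hn⟩ := hU α hα.1 hαE
    obtain ⟨k, hk⟩ := hV α hα.2 hαE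
    exact ⟨max n k, fun m hm =>
      ⟨hn m (le_trans (le_max_left _ _) hm), hk m (le_trans (le_max_right _ _) hm)⟩⟩
  isOpen_sUnion := by
    intro s hs α hα hαE
    obtain ⟨U, hUs, hαU⟩ := hα
    obtain ⟨n, hn⟩ := hs U hUs α hαU hαE
    exact ⟨n, fun m hm => ⟨U, hUs, hn m hm⟩⟩

/-- If `E ⊆ [ω, ω₁)` and `η` is a ladder system on `E` whose ladders consist of points
not in `E` (hence isolated), and `η` satisfies `2`-uniformization, then the space `X(η)`
is normal. -/
theorem stmt18 (E : Set O1) (η : O1 → ℕ → O1)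
    (hE : ∀ α ∈ E, Ordinal.omega0 ≤ (α : Ordinal))
    (hladder : ∀ α ∈ E, IsLadderAt (α : Ordinal) (fun n => ((η α n : O1) : Ordinal)))
    (hiso : ∀ α ∈ E, ∀ n, η α n ∉ E)
    (hdisj : ∀ α ∈ E, ∀ β ∈ E,
      (∃ (δ : Ordinal) (n m : ℕ), Order.IsSuccLimit δ ∧ (α : Ordinal) = δ + n ∧
        (β : Ordinal) = δ + m ∧ n ≠ m) →
      Disjoint (Set.range (η α)) (Set.range (η β)))
    (hunif : ∀ c : O1 → ℕ → ℕ, (∀ α ∈ E, ∀ n, c α n < 2) →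
      ∃ (f : O1 → ℕ) (fs : O1 → ℕ), ∀ α ∈ E, ∀ n, fs α ≤ n → f (η α n) = c α n) :
    @NormalSpace O1 (ladderTop E η) := by

  classical
  letI := ladderTop E η
  constructor
  intro H K hH hK hHK
  obtain ⟨f, fs, hf⟩ := hunif (fun α _ => if α ∈ H then 0 else 1)
    (by intro α _ n; split <;> omega)
  refine ⟨H ∪ {β | f β = 0 ∧ β ∉ K ∧ β ∉ E},
         K ∪ {β | f β ≠ 0 ∧ β ∉ H ∧ β ∉ E}, ?_, ?_,
         Set.subset_union_left, Set.subset_union_left, ?_⟩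
  · intro α hα hαE
    rcases hα with hαH | ⟨_, _, hNE⟩
    · have hαK : α ∉ K := Set.disjoint_left.mp hHK hαH
      obtain ⟨n₀, hn₀⟩ := hK.isOpen_compl α hαK hαE
      refine ⟨max n₀ (fs α), fun m hm => Or.inr ⟨?_, ?_, hiso α hαE m⟩⟩
      · have := hf α hαE m (le_trans (le_max_right _ _) hm)
        simpa [hαH] using this
      · exact hn₀ m (le_trans (le_max_left _ _) hm)
    · exact absurd hαE hNE
  · intro α hα hαE
    rcases hα with hαK | ⟨_, _, hNE⟩
    · have hαH : α ∉ H := Set.disjoint_right.mp hHK hαK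
      obtain ⟨n₀, hn₀⟩ := hH.isOpen_compl α hαH hαE
      refine ⟨max n₀ (fs α), fun m hm => Or.inr ⟨?_, ?_, hiso α hαE m⟩⟩
      · have := hf α hαE m (le_trans (le_max_right _ _) hm)
        simp only [hαH, if_false] at this
        omega
      · exact hn₀ m (le_trans (le_max_left _ _) hm)
    · exact absurd hαE hNE
  · rw [Set.disjoint_left]
    rintro x (hxH | ⟨hf0, hxK, _⟩) hxV
    · rcases hxV with hxK | ⟨_, hxH', _⟩
      · exact Set.disjoint_left.mp hHK hxH hxK
      · exact hxH' hxH
    · rcases hxV with hxK' | ⟨hf0', _, _⟩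
      · exact hxK hxK'
      · exact hf0' hf0
end
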